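/- The number of critical cubes of Ω_n of dimension n−2 equals 2^n + C(n−1,2) − 2, where C(n−1,2) is a binomial coefficient. -/

import Mathlib

/-- A (potential) cube of the cubical complex `Ω_n`: an ordered 4-tuple of finite
subsets of `ℕ`. -/
structure Cube where
  A : Finset ℕ
  B : Finset ℕ
  C : Finset ℕ
  D : Finset ℕ
deriving DecidableEq

/-- `σ` is a cube of `Ω_n`: the four parts are pairwise disjoint, their union is
`[n] = {1,…,n}`, and `A`, `C` are nonempty. -/
def IsCube (n : ℕ) (σ : Cube) : Prop :=
  Disjoint σ.A σ.B ∧ Disjoint σ.A σ.C ∧ Disjoint σ.A σ.D ∧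
  Disjoint σ.B σ.C ∧ Disjoint σ.B σ.D ∧ Disjoint σ.C σ.D ∧
  σ.A ∪ σ.B ∪ σ.C ∪ σ.D = Finset.Icc 1 n ∧
  σ.A.Nonempty ∧ σ.C.Nonempty

/-- The dimension of a cube, `|B| + |D|`. -/
def Cube.dim (σ : Cube) : ℕ := σ.B.card + σ.D.card

/-- The pivot `α(σ) = min (A ∪ B)`. -/
noncomputable def Cube.alpha (σ : Cube) : ℕ := sInf (↑(σ.A ∪ σ.B) : Set ℕ)

/-- The pivot `β(σ) = max (B ∪ C)`. -/
noncomputable def Cube.beta (σ : Cube) : ℕ := sSup (↑(σ.B ∪ σ.C) : Set ℕ)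

def M1up (σ : Cube) : Prop := σ.alpha ∈ σ.B
def M1down (σ : Cube) : Prop := σ.alpha ∈ σ.A ∧ 2 ≤ σ.A.card
def M2up (σ : Cube) : Prop := σ.A = {σ.alpha} ∧ σ.beta ∈ σ.B
def M2down (σ : Cube) : Prop :=
  σ.A = {σ.alpha} ∧ σ.beta ∈ σ.C ∧ 2 ≤ σ.C.card ∧ σ.alpha < σ.beta
def Mdown (σ : Cube) : Prop := M1down σ ∨ M2down σ
def Mup (σ : Cube) : Prop := M1up σ ∨ M2up σ
def Critical (σ : Cube) : Prop := ¬ Mdown σ ∧ ¬ Mup σ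

/-- The covering relation: `τ` is obtained from `σ` by moving exactly one element
of `B(σ) ∪ D(σ)` into `A(σ)` or into `C(σ)`. -/
def Covers (σ τ : Cube) : Prop :=
  (∃ x ∈ σ.B, τ = ⟨insert x σ.A, σ.B.erase x, σ.C, σ.D⟩) ∨
  (∃ x ∈ σ.B, τ = ⟨σ.A, σ.B.erase x, insert x σ.C, σ.D⟩) ∨
  (∃ x ∈ σ.D, τ = ⟨insert x σ.A, σ.B, σ.C, σ.D.erase x⟩) ∨
  (∃ x ∈ σ.D, τ = ⟨σ.A, σ.B, insert x σ.C, σ.D.erase x⟩)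

open Classical in
/-- The matching `μ₊ : M↓ → M↑`. -/
noncomputable def muPlus (σ : Cube) : Cube :=
  if M1down σ then ⟨σ.A.erase σ.alpha, insert σ.alpha σ.B, σ.C, σ.D⟩
  else ⟨σ.A, insert σ.beta σ.B, σ.C.erase σ.beta, σ.D⟩


open Finset

section Aux

lemma geo1 (m : ℕ) : ∑ a ∈ Icc 1 m, 2^(m-a) = 2^m - 1 := by
  induction m with
  | zero => simp
  | succ m ih =>
    rw [Finset.sum_Icc_succ_top (by omega)]
    have h2 : ∑ a ∈ Icc 1 m, 2^(m+1-a) = 2 * ∑ a ∈ Icc 1 m, 2^(m-a) := by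
      rw [Finset.mul_sum]
      refine Finset.sum_congr rfl fun a ha => ?_
      simp only [mem_Icc] at ha
      rw [← pow_succ']
      congr 1; omega
    rw [h2, ih]
    have : 1 ≤ 2^m := Nat.one_le_two_pow
    simp [pow_succ]; omega

lemma geo2 (m : ℕ) : ∑ a ∈ Icc 1 m, 2^(a-1) = 2^m - 1 := by
  induction m with
  | zero => simp
  | succ m ih =>
    rw [Finset.sum_Icc_succ_top (by omega), ih]
    have : 1 ≤ 2^m := Nat.one_le_two_pow
    simp [pow_succ]; omega

lemma innerSum2 (n c : ℕ) (hc1 : 1 ≤ c) (hcn : c ≤ n) :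
    ∑ a ∈ Icc 1 n, 2^(c - a - 1) = 2^(c-1) - 1 + (n - c + 1) := by
  have hIcc : Icc 1 n = Ioc 0 n := by rw [← Finset.Icc_add_one_left_eq_Ioc, zero_add]
  have hsplit : Ioc 0 (c-1) ∪ Ioc (c-1) n = Ioc 0 n := by
    ext x; simp only [mem_union, mem_Ioc]; omega
  have hdisj : Disjoint (Ioc 0 (c-1)) (Ioc (c-1) n) := by
    rw [Finset.disjoint_left]; intro x hx hx'
    simp only [mem_Ioc] at hx hx'; omega
  rw [hIcc, ← hsplit, Finset.sum_union hdisj]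
  have h1 : ∑ a ∈ Ioc 0 (c-1), 2^(c-a-1) = 2^(c-1) - 1 := by
    have h : Ioc 0 (c-1) = Icc 1 (c-1) := by rw [← Finset.Icc_add_one_left_eq_Ioc, zero_add]
    rw [h, ← geo1 (c-1)]
    refine Finset.sum_congr rfl fun a ha => ?_
    simp only [mem_Icc] at ha
    congr 1; omega
  have h2 : ∑ a ∈ Ioc (c-1) n, 2^(c-a-1) = n - c + 1 := by
    have hone : ∀ a ∈ Ioc (c-1) n, 2^(c-a-1) = 1 := by
      intro a ha; simp only [mem_Ioc] at ha
      have : c - a - 1 = 0 := by omega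
      rw [this, pow_zero]
    rw [Finset.sum_congr rfl hone, Finset.sum_const, Nat.card_Ioc, smul_eq_mul, mul_one]
    omega
  rw [h1, h2]

lemma sum_all (n : ℕ) (hn : 2 ≤ n) :
    ∑ p ∈ Icc 1 n ×ˢ Icc 1 n, 2^(p.2 - p.1 - 1) = 2^n - 1 + n.choose 2 := by
  rw [Finset.sum_product_right]
  have h : ∀ y ∈ Icc 1 n, ∑ x ∈ Icc 1 n, 2^((x, y).2 - (x, y).1 - 1)
      = 2^(y-1) - 1 + (n - y + 1) := by
    intro y hy; simp only [mem_Icc] at hy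
    exact innerSum2 n y hy.1 hy.2
  rw [Finset.sum_congr rfl h, Finset.sum_add_distrib]
  have e1 : ∑ y ∈ Icc 1 n, (2^(y-1) - 1) = 2^n - 1 - n := by
    rw [Finset.sum_tsub_distrib]
    · rw [geo2]; simp
    · intro y hy; exact Nat.one_le_two_pow
  have e2 : ∑ y ∈ Icc 1 n, (n - y + 1) = n.choose 2 + n := by
    rw [Finset.sum_add_distrib, Finset.sum_const, Nat.card_Icc]
    have tri : ∑ c ∈ Icc 1 n, (n - c) = n.choose 2 := by
      rw [Nat.choose_two_right, ← Finset.sum_range_id]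
      refine Finset.sum_nbij' (fun c => n - c) (fun i => n - i) ?_ ?_ ?_ ?_ ?_
      · intro c hc; simp only [mem_Icc] at hc; simp only [mem_range]; omega
      · intro i hi; simp only [mem_range] at hi; simp only [mem_Icc]; omega
      · intro c hc; simp only [mem_Icc] at hc; show n - (n - c) = c; omega
      · intro i hi; simp only [mem_range] at hi; show n - (n - i) = i; omega
      · intro c hc; rfl
    rw [tri]; simp
  rw [e1]
  rw [e2]
  have h5 : n < 2^n := Nat.lt_two_pow_self
  omega

def Tset (n : ℕ) : Finset (ℕ × ℕ × Finset ℕ) :=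
  ((Finset.Icc 1 n ×ˢ Finset.Icc 1 n).filter (fun q => q.1 ≠ q.2)).biUnion
    (fun q => ((Finset.Ioo q.1 q.2).powerset).image (fun B => (q.1, q.2, B)))

lemma mem_Tset (n : ℕ) (p : ℕ × ℕ × Finset ℕ) :
    p ∈ Tset n ↔ p.1 ∈ Icc 1 n ∧ p.2.1 ∈ Icc 1 n ∧ p.1 ≠ p.2.1 ∧ p.2.2 ⊆ Ioo p.1 p.2.1 := by
  obtain ⟨a, c, B⟩ := p
  simp only [Tset, mem_biUnion, mem_filter, mem_product, mem_image, mem_powerset]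
  constructor
  · rintro ⟨⟨x, y⟩, ⟨⟨hx, hy⟩, hne⟩, B', hB', heq⟩
    obtain ⟨rfl, rfl, rfl⟩ := Prod.mk.injEq .. ▸ (by
      have h1 : x = a := congrArg Prod.fst heq
      have h2 : y = c := congrArg (fun p => p.2.1) heq
      have h3 : B' = B := congrArg (fun p => p.2.2) heq
      exact ⟨h1, h2, h3⟩ : x = a ∧ y = c ∧ B' = B)
    exact ⟨hx, hy, hne, hB'⟩
  · rintro ⟨ha, hc, hne, hB⟩
    exact ⟨(a, c), ⟨⟨ha, hc⟩, hne⟩, B, hB, rfl⟩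

lemma Tset_card (n : ℕ) :
    (Tset n).card = ∑ q ∈ (Icc 1 n ×ˢ Icc 1 n).filter (fun q => q.1 ≠ q.2),
      2 ^ (q.2 - q.1 - 1) := by
  rw [Tset, Finset.card_biUnion]
  · refine Finset.sum_congr rfl fun q hq => ?_
    have hinj : Function.Injective (fun B : Finset ℕ => (q.1, q.2, B)) := by
      intro B B' h
      exact congrArg (fun p => p.2.2) h
    rw [Finset.card_image_of_injective _ hinj, Finset.card_powerset, Nat.card_Ioo]
  · intro x hx y hy hxy
    rw [Function.onFun, Finset.disjoint_left]
    rintro p hp hp'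
    simp only [mem_image] at hp hp'
    obtain ⟨B, _, rfl⟩ := hp
    obtain ⟨B', _, h⟩ := hp'
    apply hxy
    have h1 : y.1 = x.1 := congrArg (fun p : ℕ × ℕ × Finset ℕ => p.1) h
    have h2 : y.2 = x.2 := congrArg (fun p : ℕ × ℕ × Finset ℕ => p.2.1) h
    exact Prod.ext h1.symm h2.symm

lemma diag_card (n : ℕ) :
    ((Icc 1 n ×ˢ Icc 1 n).filter (fun q => ¬ q.1 ≠ q.2)).card = n := by
  have he : (Icc 1 n ×ˢ Icc 1 n).filter (fun q => ¬ q.1 ≠ q.2)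
      = (Icc 1 n).image (fun c => (c, c)) := by
    ext ⟨x, y⟩
    simp only [mem_filter, mem_product, mem_image, not_ne_iff, Prod.mk.injEq]
    constructor
    · rintro ⟨⟨hx, hy⟩, rfl⟩; exact ⟨x, hx, rfl, rfl⟩
    · rintro ⟨c, hc, rfl, rfl⟩; exact ⟨⟨hc, hc⟩, rfl⟩
  rw [he, Finset.card_image_of_injective _ (fun a b h => (Prod.mk.injEq .. ▸ h).1),
    Nat.card_Icc]
  omega

lemma filter_sum_val (n : ℕ) (hn : 2 ≤ n) :
    ∑ q ∈ (Icc 1 n ×ˢ Icc 1 n).filter (fun q => q.1 ≠ q.2), 2 ^ (q.2 - q.1 - 1)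
      = 2^n + (n-1).choose 2 - 2 := by
  have hh := Finset.sum_filter_add_sum_filter_not (Icc 1 n ×ˢ Icc 1 n)
    (fun q => q.1 ≠ q.2) (fun q => 2^(q.2 - q.1 - 1))
  have hdiag : ∑ q ∈ (Icc 1 n ×ˢ Icc 1 n).filter (fun q => ¬ q.1 ≠ q.2),
      2 ^ (q.2 - q.1 - 1) = n := by
    have hone : ∀ q ∈ (Icc 1 n ×ˢ Icc 1 n).filter (fun q : ℕ × ℕ => ¬ q.1 ≠ q.2),
        2 ^ (q.2 - q.1 - 1) = 1 := by
      intro q hq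
      simp only [mem_filter, not_ne_iff] at hq
      rw [← hq.2]; simp
    rw [Finset.sum_congr rfl hone, Finset.sum_const, smul_eq_mul, mul_one, _root_.diag_card]
  rw [hdiag, sum_all n hn] at hh
  have hpascal : n.choose 2 = (n - 1) + (n - 1).choose 2 := by
    obtain ⟨m, rfl⟩ : ∃ m, n = m + 1 := ⟨n - 1, by omega⟩
    rw [Nat.choose_succ_succ']
    simp [Nat.choose_one_right]
  have h4 : 2^2 ≤ 2^n := Nat.pow_le_pow_right (by norm_num) hn
  norm_num at h4
  omega

lemma sInf_singleton_union (a : ℕ) (B : Finset ℕ) (hB : ∀ b ∈ B, a ≤ b) :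
    sInf (↑(({a} : Finset ℕ) ∪ B) : Set ℕ) = a := by
  have ha : a ∈ (↑(({a} : Finset ℕ) ∪ B) : Set ℕ) := by
    simp [Finset.mem_union]
  refine le_antisymm (Nat.sInf_le ha) (le_csInf ⟨a, ha⟩ ?_)
  intro b hb
  simp only [Finset.coe_union, Set.mem_union, Finset.mem_coe, Finset.mem_singleton] at hb
  rcases hb with rfl | hb
  · exact le_refl _
  · exact hB b hb

lemma sSup_union_singleton (c : ℕ) (B : Finset ℕ) (hB : ∀ b ∈ B, b ≤ c) :
    sSup (↑(B ∪ ({c} : Finset ℕ)) : Set ℕ) = c := by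
  have hc : c ∈ (↑(B ∪ ({c} : Finset ℕ)) : Set ℕ) := by
    simp [Finset.mem_union]
  refine le_antisymm (csSup_le ⟨c, hc⟩ ?_) (le_csSup (Finset.bddAbove _) hc)
  intro b hb
  simp only [Finset.coe_union, Set.mem_union, Finset.mem_coe, Finset.mem_singleton] at hb
  rcases hb with hb | rfl
  · exact hB b hb
  · exact le_refl _

def fmap (n : ℕ) (p : ℕ × ℕ × Finset ℕ) : Cube :=
  ⟨{p.1}, p.2.2, {p.2.1}, Finset.Icc 1 n \ (p.2.2 ∪ {p.1, p.2.1})⟩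

lemma fmap_backward (n a c : ℕ) (B : Finset ℕ) (ha : a ∈ Icc 1 n) (hc : c ∈ Icc 1 n)
    (hne : a ≠ c) (hB : B ⊆ Ioo a c) :
    IsCube n (fmap n (a, c, B)) ∧ Critical (fmap n (a, c, B)) ∧
      (fmap n (a, c, B)).dim = n - 2 := by
  simp only [mem_Icc] at ha hc
  have haB : a ∉ B := fun h => by have := mem_Ioo.1 (hB h); omega
  have hcB : c ∉ B := fun h => by have := mem_Ioo.1 (hB h); omega
  have hBIcc : ∀ b ∈ B, 1 ≤ b ∧ b ≤ n := by
    intro b hb; have := mem_Ioo.1 (hB hb); omega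
  have halt : ∀ b ∈ B, a < b := fun b hb => (mem_Ioo.1 (hB hb)).1
  have hblt : ∀ b ∈ B, b < c := fun b hb => (mem_Ioo.1 (hB hb)).2
  set σ := fmap n (a, c, B) with hσ
  have hA : σ.A = {a} := rfl
  have hBB : σ.B = B := rfl
  have hC : σ.C = {c} := rfl
  have hD : σ.D = Finset.Icc 1 n \ (B ∪ {a, c}) := rfl
  have halpha : σ.alpha = a := by
    rw [Cube.alpha, hA, hBB]
    exact sInf_singleton_union a B (fun b hb => (halt b hb).le)
  have hbeta : σ.beta = c := by
    rw [Cube.beta, hBB, hC]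
    exact sSup_union_singleton c B (fun b hb => (hblt b hb).le)
  have hsub : B ∪ {a, c} ⊆ Icc 1 n := by
    intro x hx
    simp only [mem_union, mem_insert, mem_singleton] at hx
    simp only [mem_Icc]
    rcases hx with hx | rfl | rfl
    · exact hBIcc x hx
    · omega
    · omega
  refine ⟨⟨?_, ?_, ?_, ?_, ?_, ?_, ?_, ⟨a, by rw [hA]; exact mem_singleton_self a⟩,
      ⟨c, by rw [hC]; exact mem_singleton_self c⟩⟩, ⟨?_, ?_⟩, ?_⟩
  · rw [hA, hBB, Finset.disjoint_singleton_left]; exact haB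
  · rw [hA, hC, Finset.disjoint_singleton_left, mem_singleton]; exact hne
  · rw [hA, hD, Finset.disjoint_singleton_left, mem_sdiff]
    rintro ⟨-, h⟩; exact h (by simp)
  · rw [hBB, hC, Finset.disjoint_singleton_right]; exact hcB
  · rw [hBB, hD, Finset.disjoint_right]
    intro x hx
    rw [mem_sdiff] at hx
    exact fun hxB => hx.2 (mem_union_left _ hxB)
  · rw [hC, hD, Finset.disjoint_singleton_left, mem_sdiff]
    rintro ⟨-, h⟩; exact h (by simp)
  · rw [hA, hBB, hC, hD]
    ext x
    simp only [mem_union, mem_sdiff, mem_insert, mem_singleton, mem_Icc]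
    constructor
    · rintro (((rfl | hx) | rfl) | ⟨hx, -⟩)
      · omega
      · exact hBIcc x hx
      · omega
      · exact hx
    · intro hx
      by_cases hxB : x ∈ B
      · exact Or.inl (Or.inl (Or.inr hxB))
      · by_cases hxa : x = a
        · exact Or.inl (Or.inl (Or.inl hxa))
        · by_cases hxc : x = c
          · exact Or.inl (Or.inr hxc)
          · exact Or.inr ⟨hx, by tauto⟩
  · rintro (⟨-, h2⟩ | ⟨-, -, h2, -⟩)
    · rw [hA, Finset.card_singleton] at h2; omega
    · rw [hC, Finset.card_singleton] at h2; omega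
  · rintro (h | ⟨-, h⟩)
    · rw [M1up, halpha, hBB] at h; exact haB h
    · rw [hbeta, hBB] at h; exact hcB h
  · rw [Cube.dim, hBB, hD, Finset.card_sdiff_of_subset hsub, Nat.card_Icc]
    have h1 : (B ∪ {a, c}).card = B.card + 2 := by
      rw [Finset.card_union_of_disjoint, Finset.card_insert_of_notMem (by simp [hne]),
        Finset.card_singleton]
      rw [Finset.disjoint_left]
      intro x hx
      simp only [mem_insert, mem_singleton]
      rintro (rfl | rfl)
      · exact haB hx
      · exact hcB hx
    have h2 : (B ∪ {a, c}).card ≤ (Icc 1 n).card := Finset.card_le_card hsub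
    rw [Nat.card_Icc] at h2
    omega

lemma fmap_forward (n : ℕ) (hn : 2 ≤ n) (σ : Cube) (hcube : IsCube n σ)
    (hcrit : Critical σ) (hdim : σ.dim = n - 2) :
    ∃ a c B, (a ∈ Icc 1 n ∧ c ∈ Icc 1 n ∧ a ≠ c ∧ B ⊆ Ioo a c) ∧ fmap n (a, c, B) = σ := by
  obtain ⟨dAB, dAC, dAD, dBC, dBD, dCD, hU, hAne, hCne⟩ := hcube
  have d1 : Disjoint (σ.A ∪ σ.B) σ.C := Finset.disjoint_union_left.2 ⟨dAC, dBC⟩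
  have d2 : Disjoint (σ.A ∪ σ.B ∪ σ.C) σ.D :=
    Finset.disjoint_union_left.2 ⟨Finset.disjoint_union_left.2 ⟨dAD, dBD⟩, dCD⟩
  have hcard : σ.A.card + σ.B.card + σ.C.card + σ.D.card = n := by
    have h := congrArg Finset.card hU
    rw [Finset.card_union_of_disjoint d2, Finset.card_union_of_disjoint d1,
      Finset.card_union_of_disjoint dAB, Nat.card_Icc] at h
    omega
  have hA1 : σ.A.card = 1 := by
    have h1 := Finset.card_pos.2 hAne
    have h2 := Finset.card_pos.2 hCne
    rw [Cube.dim] at hdim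
    omega
  have hC1 : σ.C.card = 1 := by
    have h1 := Finset.card_pos.2 hAne
    rw [Cube.dim] at hdim
    omega
  obtain ⟨a, hAa⟩ := Finset.card_eq_one.1 hA1
  obtain ⟨c, hCc⟩ := Finset.card_eq_one.1 hC1
  have haA : a ∈ σ.A := by rw [hAa]; exact mem_singleton_self a
  have hcC : c ∈ σ.C := by rw [hCc]; exact mem_singleton_self c
  have haI : a ∈ Icc 1 n := by
    rw [← hU]; exact mem_union_left _ (mem_union_left _ (mem_union_left _ haA))
  have hcI : c ∈ Icc 1 n := by
    rw [← hU]; exact mem_union_left _ (mem_union_right _ hcC)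
  have hac : a ≠ c := fun h => Finset.disjoint_left.1 dAC haA (h ▸ hcC)
  have haS : (a : ℕ) ∈ (↑(σ.A ∪ σ.B) : Set ℕ) := by
    simp only [Finset.coe_union, Set.mem_union, Finset.mem_coe]
    exact Or.inl haA
  have hmem_alpha : σ.alpha ∈ σ.A ∪ σ.B := Nat.sInf_mem ⟨a, haS⟩
  obtain ⟨hnMdown, hnMup⟩ := hcrit
  have hnM1up : ¬ M1up σ := fun h => hnMup (Or.inl h)
  have hnM2up : ¬ M2up σ := fun h => hnMup (Or.inr h)
  have halphaA : σ.alpha ∈ σ.A := by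
    rcases Finset.mem_union.1 hmem_alpha with h | h
    · exact h
    · exact absurd h hnM1up
  have halpha : σ.alpha = a := by
    rw [hAa] at halphaA; exact mem_singleton.1 halphaA
  have hcS : (c : ℕ) ∈ (↑(σ.B ∪ σ.C) : Set ℕ) := by
    simp only [Finset.coe_union, Set.mem_union, Finset.mem_coe]
    exact Or.inr hcC
  have hmem_beta : σ.beta ∈ σ.B ∪ σ.C :=
    Nat.sSup_mem ⟨c, hcS⟩ (Finset.bddAbove _)
  have hbetaB : σ.beta ∉ σ.B := by
    intro h
    exact hnM2up ⟨by rw [hAa, halpha], h⟩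
  have hbeta : σ.beta = c := by
    rcases Finset.mem_union.1 hmem_beta with h | h
    · exact absurd h hbetaB
    · rw [hCc] at h; exact mem_singleton.1 h
  have hBsub : σ.B ⊆ Ioo a c := by
    intro b hb
    have hab : a ≤ b := by
      rw [← halpha]
      apply Nat.sInf_le
      simp only [Finset.coe_union, Set.mem_union, Finset.mem_coe]
      exact Or.inr hb
    have hbc : b ≤ c := by
      rw [← hbeta]
      apply le_csSup (Finset.bddAbove _)
      simp only [Finset.coe_union, Set.mem_union, Finset.mem_coe]
      exact Or.inl hb
    have h1 : a ≠ b := fun h => Finset.disjoint_left.1 dAB haA (h ▸ hb)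
    have h2 : b ≠ c := fun h => Finset.disjoint_left.1 dBC hb (h ▸ hcC)
    rw [mem_Ioo]
    exact ⟨lt_of_le_of_ne hab h1, lt_of_le_of_ne hbc h2⟩
  have hD : σ.D = Finset.Icc 1 n \ (σ.B ∪ {a, c}) := by
    ext x
    simp only [mem_sdiff, mem_union, mem_insert, mem_singleton]
    constructor
    · intro hx
      refine ⟨by rw [← hU]; exact mem_union_right _ hx, ?_⟩
      rintro (hxB | rfl | rfl)
      · exact Finset.disjoint_left.1 dBD hxB hx
      · exact Finset.disjoint_left.1 dAD haA hx
      · exact Finset.disjoint_left.1 dCD hcC hx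
    · rintro ⟨hxI, hxn⟩
      rw [← hU] at hxI
      rcases Finset.mem_union.1 hxI with hx | hx
      · rcases Finset.mem_union.1 hx with hx | hx
        · rcases Finset.mem_union.1 hx with hx | hx
          · rw [hAa] at hx
            exact absurd (Or.inr (Or.inl (mem_singleton.1 hx))) hxn
          · exact absurd (Or.inl hx) hxn
        · rw [hCc] at hx
          exact absurd (Or.inr (Or.inr (mem_singleton.1 hx))) hxn
      · exact hx
  refine ⟨a, c, σ.B, ⟨haI, hcI, hac, hBsub⟩, ?_⟩
  have hEta : σ = ⟨σ.A, σ.B, σ.C, σ.D⟩ := rfl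
  rw [hEta, fmap]
  simp only [Cube.mk.injEq]
  exact ⟨hAa.symm, trivial, hCc.symm, hD.symm⟩

lemma fmap_inj (n : ℕ) : Function.Injective (fmap n) := by
  intro p q h
  have h1 : ({p.1} : Finset ℕ) = {q.1} := congrArg Cube.A h
  have h2 : p.2.2 = q.2.2 := congrArg Cube.B h
  have h3 : ({p.2.1} : Finset ℕ) = {q.2.1} := congrArg Cube.C h
  have e1 : p.1 = q.1 := Finset.singleton_injective h1
  have e2 : p.2.1 = q.2.1 := Finset.singleton_injective h3
  exact Prod.ext e1 (Prod.ext e2 h2)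

end Aux

/-- The number of critical cubes of `Ω_n` of dimension `n−2` equals
`2^n + C(n−1,2) − 2`. -/
theorem count_critical_top (n : ℕ) (hn : 2 ≤ n) :
    {σ : Cube | IsCube n σ ∧ Critical σ ∧ σ.dim = n - 2}.ncard =
      2 ^ n + (n - 1).choose 2 - 2 := by
  classical
  have hset : {σ : Cube | IsCube n σ ∧ Critical σ ∧ σ.dim = n - 2}
      = ↑((Tset n).image (fmap n)) := by
    ext σ
    simp only [Set.mem_setOf_eq, Finset.coe_image, Set.mem_image, Finset.mem_coe]
    constructor
    · rintro ⟨h1, h2, h3⟩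
      obtain ⟨a, c, B, ⟨ha, hc, hne, hB⟩, heq⟩ := fmap_forward n hn σ h1 h2 h3
      exact ⟨(a, c, B), (mem_Tset n _).2 ⟨ha, hc, hne, hB⟩, heq⟩
    · rintro ⟨p, hp, rfl⟩
      obtain ⟨ha, hc, hne, hB⟩ := (mem_Tset n p).1 hp
      obtain ⟨a, c, B⟩ := p
      exact fmap_backward n a c B ha hc hne hB
  rw [hset, Set.ncard_coe_finset,
    Finset.card_image_of_injective _ (fmap_inj n), Tset_card,
    filter_sum_val n hn]
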